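/- For N > 0, D_m > 0, and 0 < T_n < D_m, it holds that (D_m + T_n)·e^(2N/(D_m+T_n)) ≤ D_m·e^(N/D_m) + T_n·e^(N/T_n); that is, hybrid NOMA requires no more energy than OMA. -/

import Mathlib

theorem stmt_3 (N Dm Tn : ℝ) (hN : 0 < N) (hD : 0 < Dm) (hT : 0 < Tn) (hTD : Tn < Dm) :
    (Dm + Tn) * Real.exp (2 * N / (Dm + Tn)) ≤
      Dm * Real.exp (N / Dm) + Tn * Real.exp (N / Tn) := by
  set s := Dm + Tn with hs
  have hspos : 0 < s := by positivity
  have h := convexOn_exp.2 (Set.mem_univ (N / Dm)) (Set.mem_univ (N / Tn))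
    (show (0:ℝ) ≤ Dm / s by positivity) (show (0:ℝ) ≤ Tn / s by positivity)
    (show Dm / s + Tn / s = 1 by field_simp; exact hs.symm)
  have key : Dm / s * (N / Dm) + Tn / s * (N / Tn) = 2 * N / s := by
    field_simp; ring
  rw [smul_eq_mul, smul_eq_mul, smul_eq_mul, smul_eq_mul, key] at h
  calc s * Real.exp (2 * N / s)
      ≤ s * (Dm / s * Real.exp (N / Dm) + Tn / s * Real.exp (N / Tn)) :=
        mul_le_mul_of_nonneg_left h hspos.le
    _ = Dm * Real.exp (N / Dm) + Tn * Real.exp (N / Tn) := by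
        field_simp
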